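/- In the setting of the previous statement (A = ℂ ⊕ W with product from e, C and τ ≠ 1, with τ also ≠ -1), set δ̃(1) := 1_A ⊗ 1_A + (τ-1)·δ(1) ∈ A ⊗ A. Then for every a ∈ A one has a·δ̃(1) = δ̃(1)·a in A ⊗ A (where A ⊗ A is a bimodule over A via multiplication in the left and right factor respectively). Consequently, putting r := (τ+1)^{-1} δ̃(1), the map s : A → A ⊗ A, a ↦ a·r is an A-A-bimodule map with m∘s = id_A, so A is a separable (hence semisimple) algebra. -/

import Mathlib

open scoped TensorProduct
open TensorProduct LinearMap

/-- The product on `A = ℂ ⊕ W`, as a bilinear map. -/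
noncomputable def mulL {W : Type*} [AddCommGroup W] [Module ℂ W]
    (e : W ⊗[ℂ] W →ₗ[ℂ] ℂ) (C : W ⊗[ℂ] W →ₗ[ℂ] W) (τ : ℂ) :
    (ℂ × W) →ₗ[ℂ] (ℂ × W) →ₗ[ℂ] (ℂ × W) :=
  LinearMap.mk₂ ℂ
    (fun x y => (x.1 * y.1 + (τ - 1)⁻¹ * e (x.2 ⊗ₜ[ℂ] y.2),
      x.1 • y.2 + y.1 • x.2 + C (x.2 ⊗ₜ[ℂ] y.2)))
    (by
      intro x x' y
      apply Prod.ext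
      · simp [add_tmul]; ring
      · simp [add_tmul]; module)
    (by
      intro c x y
      apply Prod.ext
      · simp [← smul_tmul', smul_eq_mul]; ring
      · simp [← smul_tmul', smul_smul]; module)
    (by
      intro x y y'
      apply Prod.ext
      · simp [tmul_add]; ring
      · simp [tmul_add]; module)
    (by
      intro c x y
      apply Prod.ext
      · simp [tmul_smul, smul_eq_mul]; ring
      · simp [tmul_smul, smul_smul]; module)

section helpers

variable {W : Type*} [AddCommGroup W] [Module ℂ W]
  (e : W ⊗[ℂ] W →ₗ[ℂ] ℂ) (C : W ⊗[ℂ] W →ₗ[ℂ] W) (τ : ℂ)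

lemma lemA (l : ℂ) (v : W) (t : W ⊗[ℂ] W) :
    TensorProduct.map (mulL e C τ (l, v)) LinearMap.id
      (TensorProduct.map (LinearMap.inr ℂ ℂ W) (LinearMap.inr ℂ ℂ W) t)
    = l • TensorProduct.map (LinearMap.inr ℂ ℂ W) (LinearMap.inr ℂ ℂ W) t
      + (τ - 1)⁻¹ • TensorProduct.map (LinearMap.inl ℂ ℂ W) (LinearMap.inr ℂ ℂ W)
          (TensorProduct.map e LinearMap.id
            ((TensorProduct.assoc ℂ W W W).symm (v ⊗ₜ[ℂ] t)))
      + TensorProduct.map (LinearMap.inr ℂ ℂ W) (LinearMap.inr ℂ ℂ W)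
          (rTensor W C ((TensorProduct.assoc ℂ W W W).symm (v ⊗ₜ[ℂ] t))) := by
  induction t using TensorProduct.induction_on with
  | zero => simp
  | tmul x y =>
      simp only [map_tmul, assoc_symm_tmul, rTensor_tmul, id_coe, id_eq,
        inr_apply, inl_apply]
      rw [show (mulL e C τ (l, v)) (0, x) =
          l • ((0, x) : ℂ × W) + (τ - 1)⁻¹ • ((e (v ⊗ₜ[ℂ] x), 0) : ℂ × W)
            + ((0, C (v ⊗ₜ[ℂ] x)) : ℂ × W) from by
        apply Prod.ext <;> simp [mulL]]
      rw [add_tmul, add_tmul, smul_tmul', smul_tmul']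
  | add t₁ t₂ ih₁ ih₂ =>
      simp only [tmul_add, map_add, smul_add, ih₁, ih₂]
      abel

lemma lemB (l : ℂ) (v : W) (t : W ⊗[ℂ] W) :
    TensorProduct.map LinearMap.id ((mulL e C τ).flip (l, v))
      (TensorProduct.map (LinearMap.inr ℂ ℂ W) (LinearMap.inr ℂ ℂ W) t)
    = l • TensorProduct.map (LinearMap.inr ℂ ℂ W) (LinearMap.inr ℂ ℂ W) t
      + (τ - 1)⁻¹ • TensorProduct.map (LinearMap.inr ℂ ℂ W) (LinearMap.inl ℂ ℂ W)
          (TensorProduct.map LinearMap.id e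
            ((TensorProduct.assoc ℂ W W W) (t ⊗ₜ[ℂ] v)))
      + TensorProduct.map (LinearMap.inr ℂ ℂ W) (LinearMap.inr ℂ ℂ W)
          (lTensor W C ((TensorProduct.assoc ℂ W W W) (t ⊗ₜ[ℂ] v))) := by
  induction t using TensorProduct.induction_on with
  | zero => simp
  | tmul x y =>
      simp only [map_tmul, assoc_tmul, lTensor_tmul, id_coe, id_eq,
        inr_apply, inl_apply, flip_apply]
      rw [show (mulL e C τ (0, y)) (l, v) =
          l • ((0, y) : ℂ × W) + (τ - 1)⁻¹ • ((e (y ⊗ₜ[ℂ] v), 0) : ℂ × W)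
            + ((0, C (y ⊗ₜ[ℂ] v)) : ℂ × W) from by
        apply Prod.ext <;> simp [mulL]]
      rw [tmul_add, tmul_add, tmul_smul, tmul_smul]
  | add t₁ t₂ ih₁ ih₂ =>
      simp only [add_tmul, map_add, smul_add, ih₁, ih₂]
      abel

lemma lemC (l : ℂ) (v : W) (t : W ⊗[ℂ] W) :
    TensorProduct.lift (mulL e C τ)
      (TensorProduct.map (mulL e C τ (l, v)) LinearMap.id
        (TensorProduct.map (LinearMap.inr ℂ ℂ W) (LinearMap.inr ℂ ℂ W) t))
    = ((τ - 1)⁻¹ * l * e t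
        + (τ - 1)⁻¹ * e (rTensor W C ((TensorProduct.assoc ℂ W W W).symm (v ⊗ₜ[ℂ] t))),
      (τ - 1)⁻¹ • (TensorProduct.lid ℂ W)
          (TensorProduct.map e LinearMap.id
            ((TensorProduct.assoc ℂ W W W).symm (v ⊗ₜ[ℂ] t)))
        + l • C t + C (rTensor W C ((TensorProduct.assoc ℂ W W W).symm (v ⊗ₜ[ℂ] t)))) := by
  induction t using TensorProduct.induction_on with
  | zero => simp; rfl
  | tmul x y =>
      simp only [map_tmul, lift.tmul, assoc_symm_tmul, rTensor_tmul, id_coe, id_eq,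
        inr_apply, map_tmul, lid_tmul]
      apply Prod.ext
      · simp [mulL, add_tmul, ← smul_tmul', smul_eq_mul]; ring
      · simp only [mulL, mk₂_apply, add_tmul, ← smul_tmul', map_add, map_smul]
        module
  | add t₁ t₂ ih₁ ih₂ =>
      simp only [tmul_add, map_add, ih₁, ih₂]
      apply Prod.ext
      · simp; ring
      · simp; module

end helpers

theorem stmt_16 {W : Type*} [AddCommGroup W] [Module ℂ W] [FiniteDimensional ℂ W]
    (e : W ⊗[ℂ] W →ₗ[ℂ] ℂ) (δ : ℂ →ₗ[ℂ] W ⊗[ℂ] W)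
    (C : W ⊗[ℂ] W →ₗ[ℂ] W) (D : W →ₗ[ℂ] W ⊗[ℂ] W) (τ : ℂ)
    (hτ : τ ≠ 1) (hτ' : τ ≠ -1)
    -- (e ⊗ id)(id ⊗ δ) = id_W
    (h1 : (TensorProduct.lid ℂ W).toLinearMap ∘ₗ TensorProduct.map e LinearMap.id ∘ₗ
        (TensorProduct.assoc ℂ W W W).symm.toLinearMap ∘ₗ lTensor W δ ∘ₗ
        (TensorProduct.rid ℂ W).symm.toLinearMap = LinearMap.id)
    -- (id ⊗ e)(δ ⊗ id) = id_W
    (h2 : (TensorProduct.rid ℂ W).toLinearMap ∘ₗ TensorProduct.map LinearMap.id e ∘ₗ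
        (TensorProduct.assoc ℂ W W W).toLinearMap ∘ₗ rTensor W δ ∘ₗ
        (TensorProduct.lid ℂ W).symm.toLinearMap = LinearMap.id)
    -- D = (id ⊗ C)(δ ⊗ id)
    (hD : D = lTensor W C ∘ₗ (TensorProduct.assoc ℂ W W W).toLinearMap ∘ₗ
        rTensor W δ ∘ₗ (TensorProduct.lid ℂ W).symm.toLinearMap)
    (hCD : C ∘ₗ D = LinearMap.id)
    (heδ : e ∘ₗ δ = τ • LinearMap.id)
    (hCδ : C ∘ₗ δ = 0)
    (heD : e ∘ₗ D = 0)
    -- e(C ⊗ id) = e(id ⊗ C)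
    (h3 : e ∘ₗ rTensor W C =
      e ∘ₗ lTensor W C ∘ₗ (TensorProduct.assoc ℂ W W W).toLinearMap)
    -- (id ⊗ C)(δ ⊗ id) = (C ⊗ id)(id ⊗ δ)
    (h4 : lTensor W C ∘ₗ (TensorProduct.assoc ℂ W W W).toLinearMap ∘ₗ
        rTensor W δ ∘ₗ (TensorProduct.lid ℂ W).symm.toLinearMap =
      rTensor W C ∘ₗ (TensorProduct.assoc ℂ W W W).symm.toLinearMap ∘ₗ
        lTensor W δ ∘ₗ (TensorProduct.rid ℂ W).symm.toLinearMap) :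
    let ι : W →ₗ[ℂ] ℂ × W := LinearMap.inr ℂ ℂ W
    let dT : (ℂ × W) ⊗[ℂ] (ℂ × W) :=
      ((1, 0) : ℂ × W) ⊗ₜ[ℂ] ((1, 0) : ℂ × W) + (τ - 1) • TensorProduct.map ι ι (δ 1)
    let s : (ℂ × W) → (ℂ × W) ⊗[ℂ] (ℂ × W) :=
      fun a => TensorProduct.map (mulL e C τ a) LinearMap.id ((τ + 1)⁻¹ • dT)
    (∀ a : ℂ × W,
        TensorProduct.map (mulL e C τ a) LinearMap.id dT =
          TensorProduct.map LinearMap.id ((mulL e C τ).flip a) dT) ∧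
    (∀ a : ℂ × W, TensorProduct.lift (mulL e C τ) (s a) = a) ∧
    (∀ a b : ℂ × W,
        TensorProduct.map (mulL e C τ a) LinearMap.id (s b) =
          TensorProduct.map LinearMap.id ((mulL e C τ).flip b) (s a)) := by
  intro ι dT s
  have hτ1 : (τ - 1) ≠ 0 := sub_ne_zero.mpr hτ
  have hτ2 : (τ + 1) ≠ 0 := fun h => hτ' (by linear_combination h)
  -- pointwise facts about δ 1
  have F1 : ∀ v : W, TensorProduct.map e LinearMap.id
      ((TensorProduct.assoc ℂ W W W).symm (v ⊗ₜ[ℂ] δ 1)) = (1 : ℂ) ⊗ₜ[ℂ] v := by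
    intro v
    have h := LinearMap.congr_fun h1 v
    simp only [coe_comp, Function.comp_apply, LinearEquiv.coe_coe, rid_symm_apply,
      lTensor_tmul, id_coe, id_eq] at h
    apply (TensorProduct.lid ℂ W).injective
    simpa using h
  have F2 : ∀ v : W, TensorProduct.map LinearMap.id e
      ((TensorProduct.assoc ℂ W W W) (δ 1 ⊗ₜ[ℂ] v)) = v ⊗ₜ[ℂ] (1 : ℂ) := by
    intro v
    have h := LinearMap.congr_fun h2 v
    simp only [coe_comp, Function.comp_apply, LinearEquiv.coe_coe, lid_symm_apply,
      rTensor_tmul, id_coe, id_eq] at h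
    apply (TensorProduct.rid ℂ W).injective
    simpa using h
  have F3 : ∀ v : W, lTensor W C ((TensorProduct.assoc ℂ W W W) (δ 1 ⊗ₜ[ℂ] v)) =
      rTensor W C ((TensorProduct.assoc ℂ W W W).symm (v ⊗ₜ[ℂ] δ 1)) := by
    intro v
    have h := LinearMap.congr_fun h4 v
    simpa using h
  have F4 : e (δ 1) = τ := by
    have h := LinearMap.congr_fun heδ 1
    simpa using h
  have F5 : C (δ 1) = 0 := by
    have h := LinearMap.congr_fun hCδ 1
    simpa using h
  have F6 : ∀ v : W, e (rTensor W C ((TensorProduct.assoc ℂ W W W).symm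
      (v ⊗ₜ[ℂ] δ 1))) = 0 := by
    intro v
    have h := LinearMap.congr_fun h3 ((TensorProduct.assoc ℂ W W W).symm (v ⊗ₜ[ℂ] δ 1))
    simp only [coe_comp, Function.comp_apply, LinearEquiv.coe_coe,
      LinearEquiv.apply_symm_apply] at h
    rw [h, lTensor_tmul, F5, tmul_zero, map_zero]
  have F7 : ∀ v : W, C (rTensor W C ((TensorProduct.assoc ℂ W W W).symm
      (v ⊗ₜ[ℂ] δ 1))) = v := by
    intro v
    rw [← F3 v]
    have hDv : D v = lTensor W C ((TensorProduct.assoc ℂ W W W) (δ 1 ⊗ₜ[ℂ] v)) := by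
      rw [hD]; simp
    rw [← hDv]
    have h := LinearMap.congr_fun hCD v
    simpa using h
  -- unit facts
  have hu1 : ∀ a : ℂ × W, mulL e C τ a (1, 0) = a := by
    intro a; apply Prod.ext <;> simp [mulL]
  have hu2 : ∀ a : ℂ × W, mulL e C τ (1, 0) a = a := by
    intro a; apply Prod.ext <;> simp [mulL]
  -- Part 1
  have key : ∀ a : ℂ × W,
      TensorProduct.map (mulL e C τ a) LinearMap.id dT =
        TensorProduct.map LinearMap.id ((mulL e C τ).flip a) dT := by
    have hdT : dT = ((1, 0) : ℂ × W) ⊗ₜ[ℂ] ((1, 0) : ℂ × W)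
        + (τ - 1) • TensorProduct.map (LinearMap.inr ℂ ℂ W) (LinearMap.inr ℂ ℂ W) (δ 1) :=
      rfl
    rintro ⟨l, v⟩
    rw [hdT]
    simp only [map_add, map_smul, map_tmul, id_coe, id_eq, flip_apply]
    rw [hu1, hu2, lemA e C τ l v (δ 1), lemB e C τ l v (δ 1), F1 v, F2 v, ← F3 v]
    simp only [map_tmul, inl_apply, inr_apply]
    rw [show ((l, v) : ℂ × W) = l • ((1, 0) : ℂ × W) + ((0, v) : ℂ × W) from by
      apply Prod.ext <;> simp]
    simp only [add_tmul, tmul_add, smul_tmul', tmul_smul, smul_add, smul_smul,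
      mul_inv_cancel₀ hτ1, one_smul]
    abel
  refine ⟨key, ?_, ?_⟩
  · -- Part 2
    rintro ⟨l, v⟩
    have hdT : dT = ((1, 0) : ℂ × W) ⊗ₜ[ℂ] ((1, 0) : ℂ × W)
        + (τ - 1) • TensorProduct.map (LinearMap.inr ℂ ℂ W) (LinearMap.inr ℂ ℂ W) (δ 1) :=
      rfl
    show TensorProduct.lift (mulL e C τ)
        (TensorProduct.map (mulL e C τ (l, v)) LinearMap.id ((τ + 1)⁻¹ • dT)) = _
    rw [map_smul, map_smul, hdT]
    simp only [map_add, map_smul, map_tmul, id_coe, id_eq, lift.tmul]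
    rw [hu1, hu1, lemC e C τ l v (δ 1), F1 v, F4, F5, F6 v, F7 v]
    apply Prod.ext
    · simp only [Prod.smul_fst, Prod.fst_add, smul_eq_mul, lid_tmul, one_smul,
        Prod.smul_snd, mul_zero, add_zero, smul_zero]
      field_simp
      ring
    · simp only [Prod.smul_snd, Prod.snd_add, lid_tmul, one_smul, smul_zero, add_zero]
      match_scalars
      field_simp
      ring
  · -- Part 3
    intro a b
    have comm : ∀ (f g : (ℂ × W) →ₗ[ℂ] (ℂ × W)) (x : (ℂ × W) ⊗[ℂ] (ℂ × W)),
        TensorProduct.map f LinearMap.id (TensorProduct.map LinearMap.id g x) =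
          TensorProduct.map LinearMap.id g (TensorProduct.map f LinearMap.id x) := by
      intro f g x
      have e1 : TensorProduct.map f LinearMap.id ∘ₗ TensorProduct.map LinearMap.id g =
          TensorProduct.map LinearMap.id g ∘ₗ TensorProduct.map f LinearMap.id := by
        rw [← TensorProduct.map_comp, ← TensorProduct.map_comp, comp_id, id_comp,
          comp_id, id_comp]
      exact LinearMap.congr_fun e1 x
    show TensorProduct.map (mulL e C τ a) LinearMap.id
        (TensorProduct.map (mulL e C τ b) LinearMap.id ((τ + 1)⁻¹ • dT)) =
      TensorProduct.map LinearMap.id ((mulL e C τ).flip b)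
        (TensorProduct.map (mulL e C τ a) LinearMap.id ((τ + 1)⁻¹ • dT))
    rw [map_smul, map_smul, map_smul, map_smul, key b, comm]
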